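/- Let p_1,…,p_n, n ≥ 3, be distinct points in ℝ² all lying on one affine line. Then for every circle S (center c ∈ ℝ², radius R > 0) the sum Σ_{i=1}^n (‖p_i − c‖ − R)² is strictly positive, yet the infimum of this sum over all circles equals 0; hence the minimum over circles is not attained. -/

import Mathlib

set_option maxHeartbeats 1000000


/-- Points of the Euclidean plane. -/
abbrev E2 : Type := EuclideanSpace ℝ (Fin 2)

/-- If `n ≥ 3` distinct points lie on one affine line, then every circle
(center `c`, radius `R > 0`) has strictly positive objective value
`∑ (‖pᵢ - c‖ - R)²`, yet the infimum of this objective over all circles is `0`;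
hence the minimum over circles is not attained. -/
theorem stmt_2 (n : ℕ) (hn : 3 ≤ n) (p : Fin n → E2)
    (hdistinct : Function.Injective p) (hline : Collinear ℝ (Set.range p)) :
    (∀ (c : E2) (R : ℝ), 0 < R → 0 < ∑ i, (‖p i - c‖ - R) ^ 2) ∧
    sInf {s : ℝ | ∃ (c : E2) (R : ℝ), 0 < R ∧ s = ∑ i, (‖p i - c‖ - R) ^ 2} = 0 ∧
    ¬ ∃ (c : E2) (R : ℝ), 0 < R ∧
        ∀ (c' : E2) (R' : ℝ), 0 < R' →
          (∑ i, (‖p i - c‖ - R) ^ 2) ≤ ∑ i, (‖p i - c'‖ - R') ^ 2 := by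
  classical
  -- PART 1
  have part1 : ∀ (c : E2) (R : ℝ), 0 < R → 0 < ∑ i, (‖p i - c‖ - R) ^ 2 := by
    intro c R hR
    by_contra h
    push_neg at h
    have hsum0 : ∑ i, (‖p i - c‖ - R) ^ 2 = 0 :=
      le_antisymm h (Finset.sum_nonneg fun i _ => sq_nonneg _)
    have hall : ∀ i, ‖p i - c‖ = R := by
      intro i
      have h1 := (Finset.sum_eq_zero_iff_of_nonneg (fun i _ => sq_nonneg _)).1 hsum0 i
        (Finset.mem_univ i)
      have h2 : ‖p i - c‖ - R = 0 := by
        have := pow_eq_zero_iff (two_ne_zero) |>.1 h1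
        exact this
      linarith
    have hcos : EuclideanGeometry.Cospherical (Set.range p) := by
      refine ⟨c, R, ?_⟩
      rintro _ ⟨i, rfl⟩
      rw [dist_eq_norm]
      exact hall i
    set f : Fin 3 → E2 := ![p ⟨0, by omega⟩, p ⟨1, by omega⟩, p ⟨2, by omega⟩] with hf
    have hrange : Set.range f ⊆ Set.range p := by
      rintro _ ⟨j, rfl⟩
      fin_cases j <;> exact ⟨_, rfl⟩
    have hinj : Function.Injective f := by
      intro i j hij
      fin_cases i <;> fin_cases j <;> simp_all [hf] <;>
        first
          | rfl
          | (exfalso; have := hdistinct hij; simp_all [Fin.ext_iff])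
    have hai := hcos.affineIndependent hrange hinj
    rw [affineIndependent_iff_not_collinear] at hai
    exact hai (hline.subset hrange)
  -- setup for part 2: line parametrization
  have h0n : (0 : ℕ) < n := by omega
  set p0 : E2 := p ⟨0, h0n⟩ with hp0
  obtain ⟨v, hv⟩ := (collinear_iff_of_mem (Set.mem_range_self (⟨0, h0n⟩ : Fin n))).1 hline
  choose r hr using fun i => hv (p i) (Set.mem_range_self i)
  have hvne : v ≠ 0 := by
    intro hv0
    have h1 : p ⟨1, by omega⟩ = p ⟨0, h0n⟩ := by
      rw [hr ⟨1, by omega⟩, hv0, smul_zero]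
      simp
    have := hdistinct h1
    simp [Fin.ext_iff] at this
  set u : E2 := ‖v‖⁻¹ • v with hu_def
  have hu : ‖u‖ = 1 := by
    rw [hu_def, norm_smul, norm_inv, norm_norm,
      inv_mul_cancel₀ (norm_ne_zero_iff.2 hvne)]
  set t : Fin n → ℝ := fun i => r i * ‖v‖ with ht_def
  have hpt : ∀ i, p i = t i • u + p0 := by
    intro i
    rw [ht_def, hu_def]
    have : (r i * ‖v‖) • (‖v‖⁻¹ • v) = r i • v := by
      rw [smul_smul, mul_assoc, mul_inv_cancel₀ (norm_ne_zero_iff.2 hvne), mul_one]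
    rw [this]
    exact hr i
  -- perpendicular unit vector
  set w : E2 := (WithLp.equiv 2 (Fin 2 → ℝ)).symm ![-(u 1), u 0] with hw_def
  have hw0 : w 0 = -(u 1) := by simp [hw_def]
  have hw1 : w 1 = u 0 := by simp [hw_def]
  have hw_inner : inner ℝ u w = (0 : ℝ) := by
    rw [PiLp.inner_apply, Fin.sum_univ_two, hw0, hw1]
    simp [RCLike.inner_apply]
    ring
  have hu_sq : (u 0) ^ 2 + (u 1) ^ 2 = 1 := by
    have := hu
    rw [EuclideanSpace.norm_eq, Fin.sum_univ_two] at this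
    have h2 : (Real.sqrt (‖u 0‖ ^ 2 + ‖u 1‖ ^ 2)) ^ 2 = 1 := by rw [this]; norm_num
    rw [Real.sq_sqrt (by positivity)] at h2
    simpa [sq_abs] using h2
  have hw_norm : ‖w‖ = 1 := by
    rw [EuclideanSpace.norm_eq, Fin.sum_univ_two, hw0, hw1]
    have : ‖-(u 1)‖ ^ 2 + ‖u 0‖ ^ 2 = 1 := by
      simp only [Real.norm_eq_abs, sq_abs, abs_neg]
      linarith [hu_sq]
    rw [this, Real.sqrt_one]
  -- distance formula
  have hgen : ∀ (a b : E2), ‖a‖ = 1 → ‖b‖ = 1 → inner ℝ a b = (0 : ℝ) →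
      ∀ (x y : ℝ), ‖x • a - y • b‖ ^ 2 = x ^ 2 + y ^ 2 := by
    intro a b ha hb hab x y
    rw [norm_sub_sq_real, norm_smul, norm_smul, real_inner_smul_left,
      real_inner_smul_right, ha, hb, hab]
    simp only [Real.norm_eq_abs, mul_one, mul_zero]
    rw [sq_abs, sq_abs]
    ring
  have hdist : ∀ (i : Fin n) (R : ℝ), ‖p i - (p0 + R • w)‖ = Real.sqrt ((t i) ^ 2 + R ^ 2) := by
    intro i R
    have h1 : p i - (p0 + R • w) = t i • u - R • w := by
      rw [hpt i]; abel
    have h2 := hgen u w hu hw_norm hw_inner (t i) R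
    rw [h1, ← h2, Real.sqrt_sq (norm_nonneg _)]
  -- quantitative approximation
  have key : ∀ ε : ℝ, 0 < ε → ∃ (c : E2) (R : ℝ), 0 < R ∧
      ∑ i, (‖p i - c‖ - R) ^ 2 < ε := by
    intro ε hε
    set C : ℝ := ∑ i : Fin n, (t i) ^ 4 with hC
    have hC0 : 0 ≤ C := Finset.sum_nonneg fun i _ => by positivity
    set R : ℝ := max 1 (C / ε + 1) with hRdef
    have hR1 : 1 ≤ R := le_max_left _ _
    have hR : 0 < R := lt_of_lt_of_le one_pos hR1
    refine ⟨p0 + R • w, R, hR, ?_⟩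
    have hbound : ∀ i : Fin n, (‖p i - (p0 + R • w)‖ - R) ^ 2 ≤ (t i) ^ 4 / (4 * R ^ 2) := by
      intro i
      rw [hdist i R]
      set s : ℝ := Real.sqrt ((t i) ^ 2 + R ^ 2) with hs
      have hsR : R ≤ s := by
        rw [hs]
        exact (Real.le_sqrt' hR).2 (by nlinarith [sq_nonneg (t i)])
      have hs_up : s ≤ R + (t i) ^ 2 / (2 * R) := by
        have hq : 0 ≤ ((t i) ^ 2 / (2 * R)) ^ 2 := sq_nonneg _
        have hmul : R * ((t i) ^ 2 / (2 * R)) = (t i) ^ 2 / 2 := by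
          field_simp
        have h5 : s ≤ Real.sqrt ((R + (t i) ^ 2 / (2 * R)) ^ 2) := by
          rw [hs]
          exact Real.sqrt_le_sqrt (by nlinarith)
        rwa [Real.sqrt_sq (by positivity)] at h5
      have h0 : 0 ≤ s - R := by linarith
      have h1 : s - R ≤ (t i) ^ 2 / (2 * R) := by linarith
      calc (s - R) ^ 2 ≤ ((t i) ^ 2 / (2 * R)) ^ 2 := by nlinarith
        _ = (t i) ^ 4 / (4 * R ^ 2) := by
            rw [div_pow]; ring_nf
    calc ∑ i, (‖p i - (p0 + R • w)‖ - R) ^ 2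
        ≤ ∑ i, (t i) ^ 4 / (4 * R ^ 2) :=
          Finset.sum_le_sum fun i _ => hbound i
      _ = C / (4 * R ^ 2) := by rw [hC, Finset.sum_div]
      _ < ε := by
          rw [div_lt_iff₀ (by positivity)]
          have hle : C / ε + 1 ≤ R := le_max_right _ _
          have h2 : R ≤ R ^ 2 := by nlinarith
          have h3 : (C / ε + 1) * ε ≤ R * ε :=
            mul_le_mul_of_nonneg_right hle hε.le
          have h4 : (C / ε + 1) * ε = C + ε := by
            field_simp
          nlinarith
  -- PART 2
  set S : Set ℝ := {s : ℝ | ∃ (c : E2) (R : ℝ), 0 < R ∧ s = ∑ i, (‖p i - c‖ - R) ^ 2}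
    with hS_def
  have hS_ne : S.Nonempty := ⟨∑ i, (‖p i - p0‖ - 1) ^ 2, p0, 1, one_pos, rfl⟩
  have hS_lb : ∀ s ∈ S, (0 : ℝ) ≤ s := by
    rintro s ⟨c, R, hR, rfl⟩
    exact Finset.sum_nonneg fun i _ => sq_nonneg _
  have hbdd : BddBelow S := ⟨0, hS_lb⟩
  have part2 : sInf S = 0 := by
    refine le_antisymm ?_ (le_csInf hS_ne hS_lb)
    by_contra h
    push_neg at h
    obtain ⟨c, R, hR, hlt⟩ := key (sInf S) h
    exact absurd (csInf_le hbdd ⟨c, R, hR, rfl⟩) (not_le.2 hlt)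
  refine ⟨part1, part2, ?_⟩
  -- PART 3
  rintro ⟨c, R, hR, hmin⟩
  have hmpos : 0 < ∑ i, (‖p i - c‖ - R) ^ 2 := part1 c R hR
  have hlb : ∀ s ∈ S, (∑ i, (‖p i - c‖ - R) ^ 2) ≤ s := by
    rintro s ⟨c', R', hR', rfl⟩
    exact hmin c' R' hR'
  have := le_csInf hS_ne hlb
  rw [part2] at this
  linarith
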